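/- Let a, b be positive integers and r an integer with r^a ≡ 1 (mod b) and gcd(a(r−1), b) = 1. Then the group G_{a,b,r} has order ab, every Sylow subgroup of G_{a,b,r} is cyclic, and the commutator subgroup of G_{a,b,r} is exactly the normal factor ℤ/bℤ (in particular it is cyclic of order b, and the quotient by it is cyclic of order a). -/

import Mathlib

/-- The residue class of `r` as a unit of `ZMod b`, where invertibility follows from
`r ^ a ≡ 1 (mod b)` with `a ≠ 0`. -/
noncomputable def GabrUnit (a b : ℕ) (r : ℤ) (ha : a ≠ 0)
    (hr : r ^ a ≡ 1 [ZMOD (b : ℤ)]) : (ZMod b)ˣ :=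
  (IsUnit.of_pow_eq_one (a := ((r : ZMod b))) (n := a)
    (by
      have h : ((r ^ a : ℤ) : ZMod b) = ((1 : ℤ) : ZMod b) :=
        (ZMod.intCast_eq_intCast_iff _ _ _).mpr hr
      push_cast at h
      exact h) ha).unit

/-- Additive automorphisms of `α`, viewed as multiplicative automorphisms of
`Multiplicative α`. -/
def addAutToMulAut {α : Type*} [AddZeroClass α] :
    Multiplicative (AddAut α) →* MulAut (Multiplicative α) :=
  MonoidHom.mk' (fun f => AddEquiv.toMultiplicative f.toAdd) (fun f g => by ext x; rfl)

/-- The action homomorphism `ℤ/aℤ → Aut(ℤ/bℤ)` sending the generator `1` of `ℤ/aℤ` to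
multiplication by `r` on `ℤ/bℤ` (written multiplicatively). -/
noncomputable def GabrAct (a b : ℕ) (r : ℤ) (ha : a ≠ 0)
    (hr : r ^ a ≡ 1 [ZMOD (b : ℤ)]) :
    Multiplicative (ZMod a) →* MulAut (Multiplicative (ZMod b)) :=
  AddMonoidHom.toMultiplicativeLeft
    (ZMod.lift a ⟨zmultiplesHom _ (Additive.ofMul
        (addAutToMulAut (AddAut.mulLeft (GabrUnit a b r ha hr)))), by
      have hu : (GabrUnit a b r ha hr) ^ a = 1 := by
        ext
        push_cast
        rw [GabrUnit, IsUnit.unit_spec]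
        have h : ((r ^ a : ℤ) : ZMod b) = ((1 : ℤ) : ZMod b) :=
          (ZMod.intCast_eq_intCast_iff _ _ _).mpr hr
        push_cast at h
        exact h
      rw [zmultiplesHom_apply, ← ofMul_zpow, ofMul_eq_zero,
        zpow_natCast, ← map_pow, ← map_pow, hu, map_one, map_one]⟩)

/-- `G_{a,b,r}`: the semidirect product `(ℤ/bℤ) ⋊ (ℤ/aℤ)` in which the generator `1` of
`ℤ/aℤ` acts on `ℤ/bℤ` as multiplication by `r`. -/
abbrev Gabr (a b : ℕ) (r : ℤ) (ha : a ≠ 0) (hr : r ^ a ≡ 1 [ZMOD (b : ℤ)]) : Type :=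
  Multiplicative (ZMod b) ⋊[GabrAct a b r ha hr] Multiplicative (ZMod a)


lemma gabrAct_one (a b : ℕ) (r : ℤ) (ha : a ≠ 0) (hr : r ^ a ≡ 1 [ZMOD (b : ℤ)])
    (m : ZMod b) :
    GabrAct a b r ha hr (Multiplicative.ofAdd (1 : ZMod a)) (Multiplicative.ofAdd m) =
      Multiplicative.ofAdd (((r : ZMod b)) * m) := by
  have h1 : (1 : ZMod a) = ((1 : ℤ) : ZMod a) := by push_cast; rfl
  rw [GabrAct]
  simp only [AddMonoidHom.toMultiplicativeLeft_apply_apply, toAdd_ofAdd]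
  rw [h1, ZMod.lift_coe]
  rw [zmultiplesHom_apply, one_zsmul, toMul_ofMul]
  show Multiplicative.ofAdd ((AddAut.mulLeft (GabrUnit a b r ha hr)) m) = _
  rfl

/-- For parameters `(a, b, r)` with `r ^ a ≡ 1 (mod b)` and
`gcd(a(r-1), b) = 1`, the group `G_{a,b,r}` has order `ab`, all of its Sylow subgroups are
cyclic, and its commutator subgroup is exactly the normal factor `ℤ/bℤ`; in particular the
commutator subgroup is cyclic of order `b` and the quotient by it is cyclic of order `a`. -/
theorem gabr_card_isCyclic_sylow_commutator (a b : ℕ) (ha : 0 < a) (hb : 0 < b) (r : ℤ)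
    (hr : r ^ a ≡ 1 [ZMOD (b : ℤ)]) (hgcd : Int.gcd ((a : ℤ) * (r - 1)) b = 1) :
    Nat.card (Gabr a b r ha.ne' hr) = a * b ∧
    (∀ (p : ℕ), p.Prime → ∀ P : Sylow p (Gabr a b r ha.ne' hr), IsCyclic ↥P) ∧
    commutator (Gabr a b r ha.ne' hr) =
      (SemidirectProduct.inl :
        Multiplicative (ZMod b) →* Gabr a b r ha.ne' hr).range ∧
    IsCyclic ↥(commutator (Gabr a b r ha.ne' hr)) ∧
    Nat.card ↥(commutator (Gabr a b r ha.ne' hr)) = b ∧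
    IsCyclic (Gabr a b r ha.ne' hr ⧸ commutator (Gabr a b r ha.ne' hr)) ∧
    Nat.card (Gabr a b r ha.ne' hr ⧸ commutator (Gabr a b r ha.ne' hr)) = a := by
  have hco : IsCoprime ((a : ℤ) * (r - 1)) (b : ℤ) := Int.isCoprime_iff_gcd_eq_one.mpr hgcd
  have hab : IsCoprime ((a : ℤ)) (b : ℤ) := hco.of_mul_left_left
  have hrb : IsCoprime (r - 1) (b : ℤ) := hco.of_mul_left_right
  have hNab : Nat.Coprime a b := by
    have := Int.isCoprime_iff_gcd_eq_one.mp hab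
    rwa [Int.gcd_natCast_natCast] at this
  haveI : NeZero a := ⟨ha.ne'⟩
  haveI : NeZero b := ⟨hb.ne'⟩
  set G := Gabr a b r ha.ne' hr with hGdef
  set K := (SemidirectProduct.inl : Multiplicative (ZMod b) →* G).range with hKdef
  have hK : K = (SemidirectProduct.rightHom : G →* Multiplicative (ZMod a)).ker :=
    SemidirectProduct.range_inl_eq_ker_rightHom
  let e : G ≃ Multiplicative (ZMod b) × Multiplicative (ZMod a) :=
    ⟨fun g => (g.left, g.right), fun p => ⟨p.1, p.2⟩, fun g => by cases g; rfl, fun p => rfl⟩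
  haveI : Finite G := Finite.of_equiv _ e.symm
  have hcardb : Nat.card (Multiplicative (ZMod b)) = b := by
    rw [Nat.card_congr (Multiplicative.toAdd (α := ZMod b)), Nat.card_zmod]
  have hcarda : Nat.card (Multiplicative (ZMod a)) = a := by
    rw [Nat.card_congr (Multiplicative.toAdd (α := ZMod a)), Nat.card_zmod]
  have hcardG : Nat.card G = a * b := by
    rw [Nat.card_congr e, Nat.card_prod, hcarda, hcardb, mul_comm]
  have hcardK : Nat.card K = b := by
    rw [← Nat.card_congr (MonoidHom.ofInjective SemidirectProduct.inl_injective).toEquiv]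
    exact hcardb
  haveI hKcyc : IsCyclic K :=
    isCyclic_of_surjective _ (MonoidHom.ofInjective SemidirectProduct.inl_injective).surjective
  -- the unit (r - 1) mod b
  obtain ⟨s, t, hst⟩ := hrb
  have hsu : (s : ZMod b) * ((r : ZMod b) - 1) = 1 := by
    have : ((s * (r - 1) + t * b : ℤ) : ZMod b) = ((1 : ℤ) : ZMod b) := by rw [hst]
    push_cast at this
    rwa [ZMod.natCast_self, mul_zero, add_zero] at this
  -- commutator = K
  have hcomm : commutator G = K := by
    apply le_antisymm
    · rw [hK]; exact Abelianization.commutator_subset_ker _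
    · rintro g ⟨n, rfl⟩
      set x := Multiplicative.toAdd n with hx
      set m := (s : ZMod b) * x with hm
      have key : (r : ZMod b) * m + -m = x := by
        rw [hm]
        have : ((r : ZMod b) - 1) * ((s : ZMod b) * x) = x := by
          linear_combination x * hsu
        linear_combination this
      have hc : (@Bracket.bracket G G commutatorElement (SemidirectProduct.inr (Multiplicative.ofAdd (1 : ZMod a)) : G)
          (SemidirectProduct.inl (Multiplicative.ofAdd m)) : G) ∈ commutator G :=
        Subgroup.commutator_mem_commutator (Subgroup.mem_top _) (Subgroup.mem_top _)
      have heq : (@Bracket.bracket G G commutatorElement (SemidirectProduct.inr (Multiplicative.ofAdd (1 : ZMod a)) : G)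
          (SemidirectProduct.inl (Multiplicative.ofAdd m)) : G)
          = SemidirectProduct.inl n := by
        rw [commutatorElement_def, ← map_inv, ← SemidirectProduct.inl_aut, ← map_inv,
          ← map_mul, gabrAct_one, ← ofAdd_neg, ← ofAdd_add, key, hx, ofAdd_toAdd]
      rwa [heq] at hc
  -- Sylow subgroups
  have hSyl : ∀ (p : ℕ), p.Prime → ∀ P : Sylow p G, IsCyclic ↥P := by
    intro p hp P
    haveI := Fact.mk hp
    obtain ⟨k, hk⟩ := IsPGroup.exists_card_eq P.isPGroup'
    by_cases hpb : p ∣ b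
    · -- P is contained in K
      have hpa : ¬ p ∣ a := fun hpa => hp.one_lt.ne' (Nat.eq_one_of_dvd_coprimes hNab hpa hpb)
      set g := SemidirectProduct.rightHom.comp P.toSubgroup.subtype with hg
      have h1 : Nat.card g.range ∣ p ^ k := by
        rw [← hk]
        have h2 := Subgroup.index_dvd_card (G := ↥P.toSubgroup) g.ker
        rwa [Subgroup.index, Nat.card_congr (QuotientGroup.quotientKerEquivRange g).toEquiv]
          at h2
      have h3 : Nat.card g.range ∣ a := by
        have := Subgroup.card_subgroup_dvd_card g.range
        rwa [hcarda] at this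
      obtain ⟨j, hjk, hj⟩ := (Nat.dvd_prime_pow hp).mp h1
      have hj0 : j = 0 := by
        rcases Nat.eq_zero_or_pos j with h | h
        · exact h
        · exact absurd (dvd_trans (dvd_pow_self p h.ne' |>.trans hj.symm.dvd) h3) hpa
      have hrange : g.range = ⊥ := Subgroup.eq_bot_of_card_eq _ (by rw [hj, hj0, pow_zero])
      have hPK : P.toSubgroup ≤ K := by
        intro y hy
        rw [hK, MonoidHom.mem_ker]
        have : g ⟨y, hy⟩ ∈ g.range := ⟨⟨y, hy⟩, rfl⟩
        rw [hrange, Subgroup.mem_bot] at this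
        exact this
      have e2 := Subgroup.subgroupOfEquivOfLe hPK
      exact isCyclic_of_surjective e2 e2.surjective
    · -- rightHom is injective on P
      set g := SemidirectProduct.rightHom.comp P.toSubgroup.subtype with hg
      have hbot : P.toSubgroup ⊓ K = ⊥ := by
        have h1 : Nat.card ↥(P.toSubgroup ⊓ K) ∣ p ^ k := by
          have := Subgroup.card_dvd_of_le (inf_le_left (a := P.toSubgroup) (b := K))
          rwa [hk] at this
        have h2 : Nat.card ↥(P.toSubgroup ⊓ K) ∣ b := by
          have := Subgroup.card_dvd_of_le (inf_le_right (a := P.toSubgroup) (b := K))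
          rwa [hcardK] at this
        obtain ⟨j, hjk, hj⟩ := (Nat.dvd_prime_pow hp).mp h1
        have hj0 : j = 0 := by
          rcases Nat.eq_zero_or_pos j with h | h
          · exact h
          · exact absurd (dvd_trans (dvd_pow_self p h.ne' |>.trans hj.symm.dvd) h2) hpb
        exact Subgroup.eq_bot_of_card_eq _ (by rw [hj, hj0, pow_zero])
      have hinj : Function.Injective g := by
        rw [← MonoidHom.ker_eq_bot_iff]
        ext ⟨y, hy⟩
        simp only [MonoidHom.mem_ker, Subgroup.mem_bot]
        constructor
        · intro hy1
          have hyK : y ∈ K := by rw [hK, MonoidHom.mem_ker]; exact hy1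
          have : y ∈ P.toSubgroup ⊓ K := ⟨hy, hyK⟩
          rw [hbot, Subgroup.mem_bot] at this
          exact Subtype.ext this
        · intro h1; rw [h1]; exact map_one g
      have e2 := (MonoidHom.ofInjective hinj).symm
      exact isCyclic_of_surjective e2 e2.surjective
  have hker : commutator G = (SemidirectProduct.rightHom : G →* Multiplicative (ZMod a)).ker :=
    hcomm.trans hK
  have equot : (G ⧸ commutator G) ≃* Multiplicative (ZMod a) :=
    (QuotientGroup.quotientMulEquivOfEq hker).trans
      (QuotientGroup.quotientKerEquivOfSurjective _ SemidirectProduct.rightHom_surjective)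
  refine ⟨hcardG, hSyl, hcomm, ?_, ?_, ?_, ?_⟩
  · rw [hcomm]; infer_instance
  · rw [hcomm]; exact hcardK
  · exact isCyclic_of_surjective equot.symm equot.symm.surjective
  · rw [Nat.card_congr equot.toEquiv]; exact hcarda
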